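/- Let X be a compact Hausdorff uniform space and let φ, φ₁, φ₂, … be continuous self-maps of X with φₙ → φ pointwise on X. Then for every entourage ε there exists a dense open subset E_ε of X such that for every x₀ ∈ E_ε there exist a neighborhood V of x₀ and an index n₀ such that (φₙ(x), φₙ(y)) ∈ ε for all x, y ∈ V and all n ≥ n₀. -/

import Mathlib

/-- Theorem 2.20A: If continuous self-maps `φₙ` of a compact Hausdorff uniform
space converge pointwise to a continuous map `φ`, then for every entourage `ε`
there is a dense open set of points near which the `φₙ` are eventually
`ε`-uniformly equicontinuous. -/
theorem pointwise_limit_generic_uniform {X : Type*} [UniformSpace X]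
    [CompactSpace X] [T2Space X]
    (φ : X → X) (φn : ℕ → X → X)
    (hφ : Continuous φ) (hφn : ∀ n, Continuous (φn n))
    (hconv : ∀ x : X, Filter.Tendsto (fun n => φn n x) Filter.atTop (nhds (φ x))) :
    ∀ ε ∈ uniformity X, ∃ E : Set X, IsOpen E ∧ Dense E ∧
      ∀ x₀ ∈ E, ∃ V ∈ nhds x₀, ∃ n₀ : ℕ,
        ∀ x ∈ V, ∀ y ∈ V, ∀ n ≥ n₀, (φn n x, φn n y) ∈ ε := by
  intro ε hε
  -- choose t with t ○ t ⊆ ε, s with s ○ s ⊆ t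
  obtain ⟨t, ht, htε⟩ := comp_mem_uniformity_sets hε
  obtain ⟨s, hs, hst⟩ := comp_mem_uniformity_sets ht
  -- a closed symmetric entourage δ ⊆ s
  obtain ⟨d, hd, hdc, hds⟩ := mem_uniformity_isClosed hs
  set δ : Set (X × X) := SetRel.symmetrize d with hδdef
  have hδ : δ ∈ uniformity X := symmetrize_mem_uniformity hd
  have hδsymm : SetRel.IsSymm δ := SetRel.isSymm_symmetrize
  have hδc : IsClosed δ := hdc.inter (hdc.preimage continuous_swap)
  have hδs : δ ⊆ s := (SetRel.symmetrize_subset_self (R := d)).trans hds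
  -- composition of four δ-steps lands in ε
  have hcomp : ∀ a b c e f : X, (a, b) ∈ δ → (b, c) ∈ δ → (c, e) ∈ δ → (e, f) ∈ δ →
      (a, f) ∈ ε := by
    intro a b c e f h1 h2 h3 h4
    exact htε ⟨c, hst ⟨b, hδs h1, hδs h2⟩, hst ⟨e, hδs h3, hδs h4⟩⟩
  -- the closed sets F n
  set F : ℕ → Set X := fun n =>
    ⋂ m, ⋂ k, ⋂ (_ : n ≤ m), ⋂ (_ : n ≤ k), (fun x => (φn m x, φn k x)) ⁻¹' δ with hF
  have hFmem : ∀ n x, x ∈ F n ↔ ∀ m, n ≤ m → ∀ k, n ≤ k → (φn m x, φn k x) ∈ δ := by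
    intro n x
    simp [hF, Set.mem_iInter]
    tauto
  have hFclosed : ∀ n, IsClosed (F n) := by
    intro n
    refine isClosed_iInter fun m => isClosed_iInter fun k =>
      isClosed_iInter fun _ => isClosed_iInter fun _ => ?_
    exact hδc.preimage ((hφn m).prodMk (hφn k))
  have hFcover : ⋃ n, F n = Set.univ := by
    refine Set.eq_univ_of_forall fun x => ?_
    obtain ⟨w, hw, hwsymm, hwδ⟩ := comp_symm_mem_uniformity_sets hδ
    have hball : UniformSpace.ball (φ x) w ∈ nhds (φ x) :=
      UniformSpace.ball_mem_nhds _ hw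
    have hev2 : ∀ᶠ m in Filter.atTop, φn m x ∈ UniformSpace.ball (φ x) w :=
      (hconv x).eventually_mem hball
    obtain ⟨n, hn⟩ := Filter.eventually_atTop.mp hev2
    refine Set.mem_iUnion.mpr ⟨n, (hFmem n x).mpr ?_⟩
    intro m hm k hk
    exact hwδ ⟨φ x, hwsymm.symm _ _ (hn m hm), hn k hk⟩
  -- dense open set
  refine ⟨⋃ n, interior (F n), isOpen_iUnion fun n => isOpen_interior,
    dense_iUnion_interior_of_closed hFclosed hFcover, ?_⟩
  intro x₀ hx₀
  obtain ⟨n₀, hx₀n⟩ := Set.mem_iUnion.mp hx₀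
  -- neighborhood from continuity of φn n₀
  have hW : (fun x => (φn n₀ x₀, φn n₀ x)) ⁻¹' δ ∈ nhds x₀ := by
    have : Filter.Tendsto (φn n₀) (nhds x₀) (nhds (φn n₀ x₀)) :=
      (hφn n₀).continuousAt
    exact this (UniformSpace.ball_mem_nhds _ hδ)
  refine ⟨interior (F n₀) ∩ (fun x => (φn n₀ x₀, φn n₀ x)) ⁻¹' δ,
    Filter.inter_mem (isOpen_interior.mem_nhds hx₀n) hW, n₀, ?_⟩
  rintro x ⟨hxF, hxW⟩ y ⟨hyF, hyW⟩ n hn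
  have hxF' := (hFmem n₀ x).mp (interior_subset hxF)
  have hyF' := (hFmem n₀ y).mp (interior_subset hyF)
  exact hcomp _ (φn n₀ x) (φn n₀ x₀) (φn n₀ y) _
    (hxF' n hn n₀ le_rfl) (hδsymm.symm _ _ hxW) hyW (hyF' n₀ le_rfl n hn)
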